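/- arXiv:2305.06765 — 2 statements merged into one kernel-verified Lean document; each statement's English description precedes it below -/
import Mathlib

section
/- (John-type necessary conditions with Dini derivatives.) Let x̂ solve: maximize f_0(x) over x ∈ Ω with f_i(x) ≥ 0 for i = 1,…,m. Assume each f_j with f_j(x̂) > 0 is lower semicontinuous at x̂, and each f_i (i = 0,…,m) is D^-_M-differentiable at x̂. Then there exist λ^0,…,λ^m ≥ 0, not all zero, with λ^i f_i(x̂) = 0 for i = 1,…,m, and Σ_{i=0}^m λ^i D^-_M f_i(x̂)(u) ≤ 0 for all u ∈ E. -/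
open Filter Topology

variable {E : Type*} [NormedAddCommGroup E] [NormedSpace ℝ E]

/-- Difference quotient of `f` at `x` in direction `u`. -/
noncomputable def diniQuot (f : E → ℝ) (x u : E) : ℝ → ℝ :=
  fun t => (f (x + t • u) - f x) / t

/-- Lower Dini derivative `D⁻ f(x)(u)`. -/
noncomputable def lowerDini (f : E → ℝ) (x u : E) : ℝ :=
  liminf (diniQuot f x u) (𝓝[>] 0)

/-- Upper Dini derivative `D⁺ f(x)(u)`. -/
noncomputable def upperDini (f : E → ℝ) (x u : E) : ℝ :=
  limsup (diniQuot f x u) (𝓝[>] 0)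

/-- Modified lower Dini derivative `D⁻_M f(x)(u)`. -/
noncomputable def lowerDiniM (f : E → ℝ) (x u : E) : ℝ :=
  ⨅ w : E, (lowerDini f x (u + w) - lowerDini f x w)

/-- Modified upper Dini derivative `D⁺_M f(x)(u)`. -/
noncomputable def upperDiniM (f : E → ℝ) (x u : E) : ℝ :=
  ⨆ w : E, (upperDini f x (u + w) - upperDini f x w)

/-- The difference quotients of `f` at `x` in direction `u` are bounded near `0⁺`,
so that the lower/upper Dini derivatives are genuine (finite) values. -/
def DiniFinite (f : E → ℝ) (x u : E) : Prop :=
  IsBoundedUnder (· ≤ ·) (𝓝[>] (0:ℝ)) (diniQuot f x u) ∧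
  IsBoundedUnder (· ≥ ·) (𝓝[>] (0:ℝ)) (diniQuot f x u)

/-- Finiteness of the modified lower Dini derivative. -/
def LowerDiniMFinite (f : E → ℝ) (x u : E) : Prop :=
  BddBelow (Set.range fun w : E => lowerDini f x (u + w) - lowerDini f x w)

/-- Finiteness of the modified upper Dini derivative. -/
def UpperDiniMFinite (f : E → ℝ) (x u : E) : Prop :=
  BddAbove (Set.range fun w : E => upperDini f x (u + w) - upperDini f x w)

lemma lowerDini_zero (f : E → ℝ) (x : E) : lowerDini f x 0 = 0 := by
  have h : diniQuot f x 0 = fun _ => (0:ℝ) := by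
    funext t; simp [diniQuot]
  rw [lowerDini, h, liminf_const]

lemma map_mul_right_nhdsGT {t : ℝ} (ht : 0 < t) :
    Filter.map (fun s : ℝ => s * t) (𝓝[>] (0:ℝ)) = 𝓝[>] (0:ℝ) := by
  have key : ∀ {a : ℝ}, 0 < a →
      Tendsto (fun s : ℝ => s * a) (𝓝[>] (0:ℝ)) (𝓝[>] (0:ℝ)) := by
    intro a ha
    apply tendsto_nhdsWithin_of_tendsto_nhds_of_eventually_within
    · have h := (continuous_mul_const a).tendsto (0:ℝ)
      simpa using h.mono_left nhdsWithin_le_nhds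
    · filter_upwards [self_mem_nhdsWithin] with s hs
      exact mul_pos hs ha
  refine le_antisymm (key ht) ?_
  have h2 : Filter.map (fun s : ℝ => s * t⁻¹) (𝓝[>] (0:ℝ)) ≤ 𝓝[>] (0:ℝ) :=
    key (inv_pos.mpr ht)
  calc 𝓝[>] (0:ℝ)
      = Filter.map (fun s : ℝ => s * t⁻¹ * t) (𝓝[>] (0:ℝ)) := by
        rw [show (fun s : ℝ => s * t⁻¹ * t) = id from funext fun s => by
          simp [mul_assoc, inv_mul_cancel₀ ht.ne'], Filter.map_id]
    _ = Filter.map (fun s : ℝ => s * t)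
          (Filter.map (fun s : ℝ => s * t⁻¹) (𝓝[>] (0:ℝ))) := by
        rw [Filter.map_map]; rfl
    _ ≤ _ := Filter.map_mono h2

lemma lowerDini_smul (f : E → ℝ) (x u : E) {t : ℝ} (ht : 0 < t) (hb : DiniFinite f x u) :
    lowerDini f x (t • u) = t * lowerDini f x u := by
  have hq : ∀ᶠ s in 𝓝[>] (0:ℝ),
      diniQuot f x (t • u) s = ((fun r => t * diniQuot f x u r) ∘ fun s => s * t) s := by
    filter_upwards [self_mem_nhdsWithin] with s hs
    have hs' : (0:ℝ) < s := hs
    simp only [diniQuot, Function.comp, smul_smul]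
    rw [mul_comm s t]
    field_simp
  rw [lowerDini, liminf_congr hq, liminf_comp, map_mul_right_nhdsGT ht]
  have hmono : Monotone fun r : ℝ => t * r := monotone_mul_left_of_nonneg ht.le
  have hmap := hmono.map_liminf_of_continuousAt (F := 𝓝[>] (0:ℝ)) (diniQuot f x u)
      ((continuous_const.mul continuous_id).continuousAt)
      (hb.1.isCoboundedUnder_ge) hb.2
  rw [lowerDini, hmap]; rfl

lemma lowerDiniM_le (f : E → ℝ) (x u : E) (hM : LowerDiniMFinite f x u) :
    lowerDiniM f x u ≤ lowerDini f x u := by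
  have hM' : BddBelow (Set.range fun w : E => lowerDini f x (u + w) - lowerDini f x w) := hM
  have h := ciInf_le hM' (0 : E)
  simpa [lowerDini_zero, lowerDiniM] using h

lemma lowerDiniM_zero (f : E → ℝ) (x : E) : lowerDiniM f x 0 = 0 := by
  simp [lowerDiniM, ciInf_const]

lemma lowerDiniM_superadd (f : E → ℝ) (x u v : E)
    (hMu : LowerDiniMFinite f x u) (hMv : LowerDiniMFinite f x v) :
    lowerDiniM f x u + lowerDiniM f x v ≤ lowerDiniM f x (u + v) := by
  have hMu' : BddBelow (Set.range fun w : E => lowerDini f x (u + w) - lowerDini f x w) := hMu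
  have hMv' : BddBelow (Set.range fun w : E => lowerDini f x (v + w) - lowerDini f x w) := hMv
  conv_rhs => rw [lowerDiniM]
  refine le_ciInf fun w => ?_
  have h1 : lowerDiniM f x u ≤ lowerDini f x (u + (v + w)) - lowerDini f x (v + w) :=
    ciInf_le hMu' (v + w)
  have h2 : lowerDiniM f x v ≤ lowerDini f x (v + w) - lowerDini f x w :=
    ciInf_le hMv' w
  rw [add_assoc]
  change _ ≤ lowerDini f x (u + (v + w)) - lowerDini f x w
  linarith

lemma lowerDiniM_smul_ge (f : E → ℝ) (x u : E) {t : ℝ} (ht : 0 < t)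
    (hfin : ∀ v, DiniFinite f x v) (hM : LowerDiniMFinite f x u) :
    t * lowerDiniM f x u ≤ lowerDiniM f x (t • u) := by
  have hM' : BddBelow (Set.range fun w : E => lowerDini f x (u + w) - lowerDini f x w) := hM
  conv_rhs => rw [lowerDiniM]
  refine le_ciInf fun w => ?_
  have h1 : lowerDiniM f x u ≤ lowerDini f x (u + t⁻¹ • w) - lowerDini f x (t⁻¹ • w) :=
    ciInf_le hM' (t⁻¹ • w)
  have ew : t • (t⁻¹ • w) = w := by rw [smul_smul, mul_inv_cancel₀ ht.ne', one_smul]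
  have ew2 : t • (u + t⁻¹ • w) = t • u + w := by rw [smul_add, ew]
  calc t * lowerDiniM f x u
      ≤ t * (lowerDini f x (u + t⁻¹ • w) - lowerDini f x (t⁻¹ • w)) :=
        mul_le_mul_of_nonneg_left h1 ht.le
    _ = lowerDini f x (t • u + w) - lowerDini f x w := by
        rw [mul_sub, ← lowerDini_smul f x _ ht (hfin _), ← lowerDini_smul f x _ ht (hfin _),
          ew2, ew]

/-- John-type necessary conditions with Dini derivatives:
if `xh` maximizes `f 0` over `{x ∈ Ω : f i x ≥ 0, 1 ≤ i ≤ m}`, the inactive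
constraints are lower semicontinuous at `xh`, and all functions are
`D⁻_M`-differentiable at `xh`, then nonnegative multipliers `lam`, not all
zero, exist with complementary slackness and
`∑ i, lam i * D⁻_M f_i(xh)(u) ≤ 0` for all `u`. -/
theorem john_dini (m : ℕ) (Ω : Set E) (hΩ : IsOpen Ω) (hΩne : Ω.Nonempty)
    (f : Fin (m + 1) → E → ℝ) (xh : E) (hx : xh ∈ Ω)
    (hfeas : ∀ i : Fin (m + 1), i ≠ 0 → 0 ≤ f i xh)
    (hmax : ∀ x ∈ Ω, (∀ i : Fin (m + 1), i ≠ 0 → 0 ≤ f i x) → f 0 x ≤ f 0 xh)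
    (hlsc : ∀ i : Fin (m + 1), i ≠ 0 → 0 < f i xh → LowerSemicontinuousAt (f i) xh)
    (hfin : ∀ i u, DiniFinite (f i) xh u)
    (hMfin : ∀ i u, LowerDiniMFinite (f i) xh u) :
    ∃ lam : Fin (m + 1) → ℝ,
      (∀ i, 0 ≤ lam i) ∧ lam ≠ 0 ∧
      (∀ i : Fin (m + 1), i ≠ 0 → lam i * f i xh = 0) ∧
      ∀ u : E, ∑ i, lam i * lowerDiniM (f i) xh u ≤ 0 := by
  classical
  set act : Fin (m + 1) → Prop := fun i => i = 0 ∨ f i xh = 0 with hact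
  set G : Fin (m + 1) → E → ℝ :=
    fun i u => if act i then lowerDiniM (f i) xh u else 1 with hGdef
  -- no direction makes all G i positive
  have key : ¬ ∃ u : E, ∀ i, 0 < G i u := by
    rintro ⟨u, hu⟩
    have hcont : Tendsto (fun s : ℝ => xh + s • u) (𝓝[>] (0:ℝ)) (𝓝 xh) := by
      have h : Tendsto (fun s : ℝ => xh + s • u) (𝓝 (0:ℝ)) (𝓝 (xh + (0:ℝ) • u)) :=
        (continuous_const.add (continuous_id.smul continuous_const)).tendsto 0
      simpa using h.mono_left nhdsWithin_le_nhds
    have hactive : ∀ i, act i → ∀ᶠ s in 𝓝[>] (0:ℝ), f i xh < f i (xh + s • u) := by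
      intro i hi
      have hGi : G i u = lowerDiniM (f i) xh u := by simp [hGdef, if_pos hi]
      have hpos : 0 < lowerDini (f i) xh u :=
        lt_of_lt_of_le (hGi ▸ hu i) (lowerDiniM_le (f i) xh u (hMfin i u))
      have hev := eventually_lt_of_lt_liminf (f := 𝓝[>] (0:ℝ)) hpos (hfin i u).2
      filter_upwards [hev, self_mem_nhdsWithin] with s hs hs0
      have hs0' : (0:ℝ) < s := hs0
      have hA : 0 < f i (xh + s • u) - f i xh := by
        have h' := mul_pos hs hs0'
        rwa [diniQuot, div_mul_cancel₀ _ hs0'.ne'] at h'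
      linarith
    have hinactive : ∀ i, ¬ act i → ∀ᶠ s in 𝓝[>] (0:ℝ), (0:ℝ) < f i (xh + s • u) := by
      intro i hi
      simp only [hact, not_or] at hi
      have hipos : 0 < f i xh := lt_of_le_of_ne (hfeas i hi.1) (Ne.symm hi.2)
      exact hcont.eventually (hlsc i hi.1 hipos 0 hipos)
    have hΩev : ∀ᶠ s in 𝓝[>] (0:ℝ), xh + s • u ∈ Ω := hcont.eventually (hΩ.mem_nhds hx)
    have hall : ∀ᶠ s in 𝓝[>] (0:ℝ), ∀ i,
        (act i → f i xh < f i (xh + s • u)) ∧ (¬ act i → 0 < f i (xh + s • u)) := by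
      refine eventually_all.2 fun i => ?_
      by_cases h : act i
      · filter_upwards [hactive i h] with s hs
        exact ⟨fun _ => hs, fun h' => absurd h h'⟩
      · filter_upwards [hinactive i h] with s hs
        exact ⟨fun h' => absurd h' h, fun _ => hs⟩
    obtain ⟨s, hs1, hs2⟩ := (hall.and hΩev).exists
    have hfeas' : ∀ i : Fin (m + 1), i ≠ 0 → 0 ≤ f i (xh + s • u) := by
      intro i hi
      by_cases h : act i
      · exact le_of_lt (lt_of_le_of_lt (hfeas i hi) ((hs1 i).1 h))
      · exact le_of_lt ((hs1 i).2 h)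
    have h0 : f 0 xh < f 0 (xh + s • u) := (hs1 0).1 (Or.inl rfl)
    exact absurd (hmax _ hs2 hfeas') (not_le.mpr h0)
  -- separation in ℝ^{m+1}
  set S : Set (Fin (m + 1) → ℝ) := Set.univ.pi fun _ => Set.Ioi (0:ℝ) with hSdef
  set C : Set (Fin (m + 1) → ℝ) := {y | ∃ u : E, ∀ i, y i ≤ G i u} with hCdef
  have hSopen : IsOpen S := isOpen_set_pi Set.finite_univ fun i _ => isOpen_Ioi
  have hSconv : Convex ℝ S := convex_pi fun i _ => convex_Ioi 0
  have hGconc : ∀ (a b : ℝ) (u v : E), 0 ≤ a → 0 ≤ b → a + b = 1 →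
      ∀ i, a * G i u + b * G i v ≤ G i (a • u + b • v) := by
    intro a b u v ha hb hab i
    by_cases hi : act i
    · simp only [hGdef, if_pos hi]
      rcases eq_or_lt_of_le ha with h|h
      · have hb1 : b = 1 := by linarith
        simp [← h, hb1]
      · rcases eq_or_lt_of_le hb with h2|h2
        · have ha1 : a = 1 := by linarith
          simp [← h2, ha1]
        · have s1 := lowerDiniM_smul_ge (f i) xh u h (hfin i) (hMfin i u)
          have s2 := lowerDiniM_smul_ge (f i) xh v h2 (hfin i) (hMfin i v)
          have s3 := lowerDiniM_superadd (f i) xh (a • u) (b • v) (hMfin i _) (hMfin i _)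
          linarith
    · simp only [hGdef, if_neg hi]
      linarith
  have hCconv : Convex ℝ C := by
    rintro y ⟨u, hy⟩ z ⟨v, hz⟩ a b ha hb hab
    refine ⟨a • u + b • v, fun i => ?_⟩
    calc (a • y + b • z) i = a * y i + b * z i := rfl
      _ ≤ a * G i u + b * G i v :=
          add_le_add (mul_le_mul_of_nonneg_left (hy i) ha)
            (mul_le_mul_of_nonneg_left (hz i) hb)
      _ ≤ G i (a • u + b • v) := hGconc a b u v ha hb hab i
  have hdisj : Disjoint S C := by
    rw [Set.disjoint_left]
    rintro y hyS ⟨u, hyu⟩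
    refine key ⟨u, fun i => ?_⟩
    exact lt_of_lt_of_le (hyS i (Set.mem_univ i)) (hyu i)
  obtain ⟨φ, c, hφS, hφC⟩ := geometric_hahn_banach_open hSconv hSopen hCconv hdisj
  have hG0 : ∀ i, (0:ℝ) ≤ G i 0 := by
    intro i
    by_cases hi : act i
    · simp [hGdef, if_pos hi, lowerDiniM_zero]
    · simp [hGdef, if_neg hi]
  have h0C : (0 : Fin (m + 1) → ℝ) ∈ C := ⟨0, fun i => hG0 i⟩
  have hc_le : c ≤ 0 := by simpa using hφC 0 h0C
  have hφ_nonpos : ∀ y : Fin (m + 1) → ℝ, (∀ i, 0 ≤ y i) → φ y ≤ 0 := by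
    intro y hy
    have hten : Tendsto (fun ε : ℝ => φ (y + ε • fun _ => (1:ℝ))) (𝓝[>] (0:ℝ)) (𝓝 (φ y)) := by
      have hco : Continuous fun ε : ℝ => y + ε • (fun _ => (1:ℝ)) :=
        continuous_const.add (continuous_id.smul continuous_const)
      have h := ((φ.continuous.comp hco).tendsto (0:ℝ)).mono_left
        (nhdsWithin_le_nhds (s := Set.Ioi (0:ℝ)))
      simp only [Function.comp_apply, zero_smul, add_zero] at h
      exact h
    refine le_of_tendsto hten ?_
    filter_upwards [self_mem_nhdsWithin] with ε hε
    have hεpos : (0:ℝ) < ε := hε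
    have hmem : (y + ε • fun _ => (1:ℝ)) ∈ S := by
      intro i _
      simp only [Set.mem_Ioi, Pi.add_apply, Pi.smul_apply, smul_eq_mul, mul_one]
      linarith [hy i]
    exact le_trans (hφS _ hmem).le hc_le
  have hc_ge : (0:ℝ) ≤ c := by
    have hten : Tendsto (fun ε : ℝ => φ (ε • fun _ => (1:ℝ))) (𝓝[>] (0:ℝ)) (𝓝 0) := by
      have hco : Continuous fun ε : ℝ => ε • (fun _ : Fin (m + 1) => (1:ℝ)) :=
        continuous_id.smul continuous_const
      have h := ((φ.continuous.comp hco).tendsto (0:ℝ)).mono_left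
        (nhdsWithin_le_nhds (s := Set.Ioi (0:ℝ)))
      simp only [Function.comp_apply, zero_smul, map_zero] at h
      exact h
    refine le_of_tendsto hten ?_
    filter_upwards [self_mem_nhdsWithin] with ε hε
    have hεpos : (0:ℝ) < ε := hε
    have hmem : (ε • fun _ => (1:ℝ)) ∈ S := by
      intro i _
      have : (ε • fun _ => (1:ℝ)) i = ε * 1 := rfl
      rw [this]
      simp only [Set.mem_Ioi]
      linarith
    exact (hφS _ hmem).le
  -- multipliers
  set lam : Fin (m + 1) → ℝ := fun i => -φ (fun j => if i = j then (1:ℝ) else 0) with hlam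
  have hφ_eq : ∀ y : Fin (m + 1) → ℝ, φ y = -∑ i, y i * lam i := by
    intro y
    have h := LinearMap.pi_apply_eq_sum_univ (φ : (Fin (m + 1) → ℝ) →ₗ[ℝ] ℝ) y
    simp only [ContinuousLinearMap.coe_coe, smul_eq_mul] at h
    rw [h, hlam, ← Finset.sum_neg_distrib]
    refine Finset.sum_congr rfl fun i _ => by ring
  have lam_nonneg : ∀ i, 0 ≤ lam i := by
    intro i
    have h := hφ_nonpos (fun j => if i = j then (1:ℝ) else 0)
      (fun j => by by_cases h : i = j <;> simp [h])
    have h2 : lam i = -φ (fun j => if i = j then (1:ℝ) else 0) := rfl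
    rw [h2]
    linarith
  have hmain : ∀ u : E, ∑ i, lam i * G i u ≤ 0 := by
    intro u
    have hy : (fun i => G i u) ∈ C := ⟨u, fun i => le_rfl⟩
    have h2 : (0:ℝ) ≤ φ (fun i => G i u) := le_trans hc_ge (hφC _ hy)
    rw [hφ_eq] at h2
    have h3 : ∑ i, G i u * lam i ≤ 0 := by linarith
    calc ∑ i, lam i * G i u = ∑ i, G i u * lam i :=
          Finset.sum_congr rfl fun i _ => mul_comm _ _
      _ ≤ 0 := h3
  have hlam_ne : lam ≠ 0 := by
    intro h
    have hmem : (fun _ : Fin (m + 1) => (1:ℝ)) ∈ S := fun i _ => Set.mem_Ioi.mpr one_pos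
    have h1 : φ (fun _ => (1:ℝ)) < c := hφS _ hmem
    rw [hφ_eq] at h1
    simp [h] at h1
    linarith
  have hslack : ∀ i, ¬ act i → lam i = 0 := by
    have h := hmain 0
    have hterm : ∀ i ∈ Finset.univ, (0:ℝ) ≤ lam i * G i 0 := fun i _ =>
      mul_nonneg (lam_nonneg i) (hG0 i)
    have hzero := (Finset.sum_eq_zero_iff_of_nonneg hterm).1
      (le_antisymm h (Finset.sum_nonneg hterm))
    intro i hi
    have hi0 := hzero i (Finset.mem_univ i)
    rw [hGdef] at hi0
    simp only [if_neg hi, mul_one] at hi0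
    exact hi0
  refine ⟨lam, lam_nonneg, hlam_ne, ?_, ?_⟩
  · intro i hi
    by_cases h : f i xh = 0
    · rw [h, mul_zero]
    · have : ¬ act i := fun hcon => Or.elim hcon hi h
      rw [hslack i this, zero_mul]
  · intro u
    have heq : ∑ i, lam i * lowerDiniM (f i) xh u = ∑ i, lam i * G i u := by
      refine Finset.sum_congr rfl fun i _ => ?_
      by_cases hi : act i
      · rw [hGdef]; simp [if_pos hi]
      · rw [hslack i hi, zero_mul, zero_mul]
    rw [heq]
    exact hmain u
end

section
/- (Pourciau-type extension to pseudoconvexity.) Let x̂ solve: minimize f_0 over x ∈ Ω with f_i(x) ≤ 0, i = 1,…,m. Assume F = (f_0,…,f_m) is D^+_M-pseudoconvex at x̂ and each f_j with f_j(x̂) < 0 is upper semicontinuous at x̂. Then there exists a nonzero (λ^0,…,λ^m) with λ^i ≥ 0, λ^i f_i(x̂) = 0 for i = 1,…,m, and setting f = Σ_{i=0}^m λ^i f_i, one has λ^0 f_0(x̂) = f(x̂) ≤ f(x) for all x ∈ Ω. -/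
open Filter Topology

variable {E : Type*} [NormedAddCommGroup E] [NormedSpace ℝ E]

lemma upperDini_zero (f : E → ℝ) (x : E) : upperDini f x 0 = 0 := by
  have : diniQuot f x 0 = fun _ => (0:ℝ) := by
    funext t; simp [diniQuot]
  rw [upperDini, this, limsup_const]

lemma map_mul_nhdsGT (a : ℝ) (ha : 0 < a) :
    Filter.map (fun t : ℝ => a * t) (𝓝[>] (0:ℝ)) = 𝓝[>] (0:ℝ) := by
  have h := (Homeomorph.mulLeft₀ a ha.ne').isEmbedding.map_nhdsWithin_eq (Set.Ioi 0) (0:ℝ)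
  simpa [Homeomorph.coe_mulLeft₀, Set.image_const_mul_Ioi_zero ha] using h

lemma diniQuot_smul (f : E → ℝ) (x u : E) (a : ℝ) (ha : 0 < a) :
    diniQuot f x (a • u) = fun t => a * diniQuot f x u (a * t) := by
  funext t
  rcases eq_or_ne t 0 with rfl | ht
  · simp [diniQuot]
  · have : t • a • u = (a * t) • u := by rw [smul_smul, mul_comm]
    rw [diniQuot, diniQuot, this]
    field_simp

lemma upperDini_smul (f : E → ℝ) (x u : E) (a : ℝ) (ha : 0 < a)
    (hb : DiniFinite f x u) : upperDini f x (a • u) = a * upperDini f x u := by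
  rw [upperDini, diniQuot_smul f x u a ha]
  have hmap : (fun t => a * diniQuot f x u (a * t)) = (fun s => a * diniQuot f x u s) ∘ (fun t => a * t) := rfl
  rw [hmap]
  have h1 : limsup ((fun s => a * diniQuot f x u s) ∘ fun t => a * t) (𝓝[>] (0:ℝ))
      = limsup (fun s => a * diniQuot f x u s) (Filter.map (fun t => a * t) (𝓝[>] (0:ℝ))) := by
    simp only [Filter.limsup, Filter.map_map]
  rw [h1, map_mul_nhdsGT a ha]
  have hmono : Monotone (fun s : ℝ => a * s) := fun s t hst => mul_le_mul_of_nonneg_left hst ha.le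
  have := hmono.map_limsup_of_continuousAt (F := 𝓝[>] (0:ℝ)) (diniQuot f x u)
    (by fun_prop) hb.1 (hb.2.isCoboundedUnder_le)
  rw [upperDini, this]
  rfl

lemma upperDiniM_zero (f : E → ℝ) (x : E) : upperDiniM f x 0 = 0 := by
  have : (fun w : E => upperDini f x (0 + w) - upperDini f x w) = fun _ => (0:ℝ) := by
    funext w; rw [zero_add]; ring
  rw [upperDiniM, this, ciSup_const]

lemma le_upperDiniM (f : E → ℝ) (x u w : E) (h : UpperDiniMFinite f x u) :
    upperDini f x (u + w) - upperDini f x w ≤ upperDiniM f x u :=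
  le_ciSup h w

lemma upperDini_le_upperDiniM (f : E → ℝ) (x u : E) (h : UpperDiniMFinite f x u) :
    upperDini f x u ≤ upperDiniM f x u := by
  have := le_upperDiniM f x u 0 h
  rwa [add_zero, upperDini_zero, sub_zero] at this

lemma upperDiniM_add_le (f : E → ℝ) (x u v : E)
    (hu : UpperDiniMFinite f x u) (hv : UpperDiniMFinite f x v) :
    upperDiniM f x (u + v) ≤ upperDiniM f x u + upperDiniM f x v := by
  have : Nonempty E := ⟨0⟩
  refine ciSup_le fun w => ?_
  have h1 : upperDini f x (u + (v + w)) - upperDini f x (v + w) ≤ upperDiniM f x u :=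
    le_upperDiniM f x u (v + w) hu
  have h2 : upperDini f x (v + w) - upperDini f x w ≤ upperDiniM f x v :=
    le_upperDiniM f x v w hv
  have : u + v + w = u + (v + w) := add_assoc u v w
  rw [this]
  linarith

lemma upperDiniM_smul (f : E → ℝ) (x u : E) (a : ℝ) (ha : 0 < a)
    (hb : ∀ v : E, DiniFinite f x v) (hM : ∀ v : E, UpperDiniMFinite f x v) :
    upperDiniM f x (a • u) = a * upperDiniM f x u := by
  have : Nonempty E := ⟨0⟩
  apply le_antisymm
  · refine ciSup_le fun w => ?_
    have hw : a • u + w = a • (u + a⁻¹ • w) := by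
      rw [smul_add, smul_smul, mul_inv_cancel₀ ha.ne', one_smul]
    have hw2 : w = a • (a⁻¹ • w) := by rw [smul_smul, mul_inv_cancel₀ ha.ne', one_smul]
    rw [hw, upperDini_smul f x _ a ha (hb _)]
    have hw3 : upperDini f x w = a * upperDini f x (a⁻¹ • w) := by
      conv_lhs => rw [hw2]
      exact upperDini_smul f x _ a ha (hb _)
    rw [hw3, ← mul_sub]
    exact mul_le_mul_of_nonneg_left (le_upperDiniM f x u _ (hM u)) ha.le
  · rw [← le_div_iff₀' ha]
    refine ciSup_le fun w => ?_
    rw [le_div_iff₀' ha, mul_sub, ← upperDini_smul f x _ a ha (hb _), ← upperDini_smul f x _ a ha (hb _), smul_add]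
    exact le_upperDiniM f x (a • u) (a • w) (hM _)

lemma upperDiniM_smul_le (f : E → ℝ) (x u : E) (a : ℝ) (ha : 0 ≤ a)
    (hb : ∀ v : E, DiniFinite f x v) (hM : ∀ v : E, UpperDiniMFinite f x v) :
    upperDiniM f x (a • u) ≤ a * upperDiniM f x u := by
  rcases eq_or_lt_of_le ha with rfl | ha'
  · simp [upperDiniM_zero]
  · exact le_of_eq (upperDiniM_smul f x u a ha' hb hM)

/-- Pourciau-type extension to pseudoconvexity: if `xh` solves
the minimization problem, `F = (f 0, …, f m)` is `D⁺_M`-pseudoconvex at `xh`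
and the inactive constraints are upper semicontinuous at `xh`, then there is
a nonzero nonnegative multiplier vector `lam` with complementary slackness
such that `f := ∑ i, lam i * f i` satisfies
`lam 0 * f 0 xh = f xh ≤ f x` for every `x ∈ Ω`. -/
theorem pourciau_pseudoconvex (m : ℕ) (Ω : Set E) (hΩ : IsOpen Ω) (hΩne : Ω.Nonempty)
    (f : Fin (m + 1) → E → ℝ) (xh : E) (hx : xh ∈ Ω)
    (hfeas : ∀ i : Fin (m + 1), i ≠ 0 → f i xh ≤ 0)
    (hmin : ∀ x ∈ Ω, (∀ i : Fin (m + 1), i ≠ 0 → f i x ≤ 0) → f 0 xh ≤ f 0 x)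
    (husc : ∀ i : Fin (m + 1), i ≠ 0 → f i xh < 0 → UpperSemicontinuousAt (f i) xh)
    (hfin : ∀ i u, DiniFinite (f i) xh u)
    (hMfin : ∀ i u, UpperDiniMFinite (f i) xh u)
    (hpc : ∀ x ∈ Ω, ∃ η : E, ∀ w : Fin (m + 1) → ℝ, (∀ i, 0 ≤ w i) →
      0 ≤ ∑ i, w i * upperDiniM (f i) xh η → 0 ≤ ∑ i, w i * (f i x - f i xh)) :
    ∃ lam : Fin (m + 1) → ℝ,
      (∀ i, 0 ≤ lam i) ∧ lam ≠ 0 ∧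
      (∀ i : Fin (m + 1), i ≠ 0 → lam i * f i xh = 0) ∧
      lam 0 * f 0 xh = ∑ i, lam i * f i xh ∧
      ∀ x ∈ Ω, ∑ i, lam i * f i xh ≤ ∑ i, lam i * f i x := by
  classical
  set g : Fin (m + 1) → E → ℝ := fun i u => upperDiniM (f i) xh u with hgdef
  set A : Fin (m + 1) → Prop := fun i => i = 0 ∨ f i xh = 0 with hAdef
  -- Step 2: no common descent direction for the active functions
  have step2 : ¬ ∃ u : E, ∀ i, A i → g i u < 0 := by
    rintro ⟨u, hu⟩
    have htend : Tendsto (fun t : ℝ => xh + t • u) (𝓝[>] 0) (𝓝 xh) := by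
      have : Tendsto (fun t : ℝ => xh + t • u) (𝓝 0) (𝓝 (xh + (0:ℝ) • u)) := by
        exact (continuous_const.add ((continuous_id.smul continuous_const))).tendsto 0
      simpa using this.mono_left nhdsWithin_le_nhds
    have hev : ∀ i : Fin (m + 1), ∀ᶠ t in 𝓝[>] (0:ℝ),
        (A i → f i (xh + t • u) < f i xh) ∧ (¬ A i → f i (xh + t • u) < 0) := by
      intro i
      by_cases hAi : A i
      · have hDu : upperDini (f i) xh u < 0 :=
          lt_of_le_of_lt (upperDini_le_upperDiniM (f i) xh u (hMfin i u)) (hu i hAi)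
        have h1 : ∀ᶠ t in 𝓝[>] (0:ℝ), diniQuot (f i) xh u t < 0 :=
          eventually_lt_of_limsup_lt hDu (hfin i u).1
        have h2 : ∀ᶠ t in 𝓝[>] (0:ℝ), (0:ℝ) < t := self_mem_nhdsWithin
        filter_upwards [h1, h2] with t h1t h2t
        refine ⟨fun _ => ?_, fun h => absurd hAi h⟩
        have := (div_neg_iff.mp h1t)
        rcases this with ⟨_, h⟩ | ⟨h, _⟩
        · linarith
        · linarith [h]
      · have hne : i ≠ 0 := fun h => hAi (Or.inl h)
        have hlt : f i xh < 0 :=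
          lt_of_le_of_ne (hfeas i hne) (fun h => hAi (Or.inr h))
        have := (husc i hne hlt) 0 hlt
        have := htend.eventually this
        filter_upwards [this] with t ht
        exact ⟨fun h => absurd h hAi, fun _ => ht⟩
    have hΩev : ∀ᶠ t in 𝓝[>] (0:ℝ), xh + t • u ∈ Ω :=
      htend.eventually (hΩ.eventually_mem hx)
    have hall : ∀ᶠ t in 𝓝[>] (0:ℝ), (∀ i : Fin (m + 1),
        (A i → f i (xh + t • u) < f i xh) ∧ (¬ A i → f i (xh + t • u) < 0)) ∧
        xh + t • u ∈ Ω := (eventually_all.2 hev).and hΩev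
    obtain ⟨t, hts, htΩ⟩ := hall.exists
    have hfeas' : ∀ i : Fin (m + 1), i ≠ 0 → f i (xh + t • u) ≤ 0 := by
      intro i hi
      by_cases hAi : A i
      · have := (hts i).1 hAi
        have hfi0 : f i xh = 0 := hAi.resolve_left hi
        linarith
      · exact ((hts i).2 hAi).le
    have h0 : f 0 (xh + t • u) < f 0 xh := (hts 0).1 (Or.inl rfl)
    exact absurd (hmin _ htΩ hfeas') (not_le.mpr h0)
  -- Separation
  set s : Set (Fin (m + 1) → ℝ) := {y | ∀ i, A i → y i < 0} with hsdef
  set C : Set (Fin (m + 1) → ℝ) := {y | ∃ u : E, ∀ i, A i → g i u ≤ y i} with hCdef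
  have hsopen : IsOpen s := by
    have : s = ⋂ i, {y : Fin (m + 1) → ℝ | A i → y i < 0} := by
      ext y; simp [hsdef, Set.mem_iInter]
    rw [this]
    refine isOpen_iInter_of_finite fun i => ?_
    by_cases hAi : A i
    · simpa [hAi] using (isOpen_lt (continuous_apply i) continuous_const)
    · simp [hAi]
  have hsconv : Convex ℝ s := by
    intro y hy z hz a b ha hb hab
    intro i hAi
    have h1 := hy i hAi
    have h2 := hz i hAi
    simp only [Pi.add_apply, Pi.smul_apply, smul_eq_mul]
    rcases eq_or_lt_of_le ha with rfl | ha'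
    · simp at hab; nlinarith
    · nlinarith
  have hCconv : Convex ℝ C := by
    rintro y ⟨u, hy⟩ z ⟨v, hz⟩ a b ha hb hab
    refine ⟨a • u + b • v, fun i hAi => ?_⟩
    have h1 : g i (a • u + b • v) ≤ g i (a • u) + g i (b • v) :=
      upperDiniM_add_le (f i) xh _ _ (hMfin i _) (hMfin i _)
    have h2 : g i (a • u) ≤ a * g i u :=
      upperDiniM_smul_le (f i) xh u a ha (hfin i) (hMfin i)
    have h3 : g i (b • v) ≤ b * g i v :=
      upperDiniM_smul_le (f i) xh v b hb (hfin i) (hMfin i)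
    have h4 : a * g i u ≤ a * y i := mul_le_mul_of_nonneg_left (hy i hAi) ha
    have h5 : b * g i v ≤ b * z i := mul_le_mul_of_nonneg_left (hz i hAi) hb
    simp only [Pi.add_apply, Pi.smul_apply, smul_eq_mul]
    linarith
  have hdisj : Disjoint s C := by
    rw [Set.disjoint_left]
    rintro y hys ⟨u, hyC⟩
    exact step2 ⟨u, fun i hAi => lt_of_le_of_lt (hyC i hAi) (hys i hAi)⟩
  obtain ⟨L, c, hLs, hLC⟩ := geometric_hahn_banach_open hsconv hsopen hCconv hdisj
  set lam : Fin (m + 1) → ℝ := fun i => L (fun j => if i = j then 1 else 0) with hlamdef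
  have hLrepr : ∀ y : Fin (m + 1) → ℝ, L y = ∑ i, y i * lam i := by
    intro y
    have := LinearMap.pi_apply_eq_sum_univ (L : (Fin (m + 1) → ℝ) →ₗ[ℝ] ℝ) y
    simpa [smul_eq_mul] using this
  have h0C : (0 : Fin (m + 1) → ℝ) ∈ C := ⟨0, fun i _ => by simp [hgdef, upperDiniM_zero]⟩
  have hc0 : c ≤ 0 := by simpa using hLC 0 h0C
  -- c ≥ 0
  have hc0' : 0 ≤ c := by
    have htd : Tendsto (fun ε : ℝ => L (fun _ => -ε)) (𝓝[>] 0) (𝓝 0) := by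
      have hcont : Continuous (fun ε : ℝ => L (fun _ => -ε)) :=
        L.continuous.comp (continuous_pi fun _ => continuous_neg)
      have := hcont.tendsto 0
      simp only [neg_zero] at this
      have h00 : L (fun _ : Fin (m + 1) => (0:ℝ)) = 0 := by
        have h : (fun _ : Fin (m + 1) => (0:ℝ)) = 0 := rfl
        rw [h, map_zero]
      rw [h00] at this
      exact this.mono_left nhdsWithin_le_nhds
    refine le_of_tendsto htd ?_
    filter_upwards [self_mem_nhdsWithin] with ε (hε : (0:ℝ) < ε)
    exact (hLs (fun _ => -ε) (fun i _ => by simpa using hε)).le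
  have hceq : c = 0 := le_antisymm hc0 hc0'
  subst hceq
  have hlamA : ∀ i, A i → 0 ≤ lam i := by
    intro i hAi
    by_contra hneg
    push_neg at hneg
    set e : Fin (m + 1) → ℝ := fun j => if i = j then 1 else 0 with hedef
    set M : ℝ := L (fun _ => (-1:ℝ)) with hMdef
    set R : ℝ := max 0 ((1 - M) / (-lam i)) with hRdef
    have hR0 : 0 ≤ R := le_max_left _ _
    have hy : ((fun _ => (-1:ℝ)) - R • e) ∈ s := by
      intro j _
      simp only [Pi.sub_apply, Pi.smul_apply, smul_eq_mul, hedef]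
      by_cases hij : i = j
      · simp [hij]; linarith
      · simp [hij]
    have hLy : L ((fun _ => (-1:ℝ)) - R • e) = M - R * lam i := by
      rw [map_sub, map_smul]
      rfl
    have hlt := hLs _ hy
    rw [hLy] at hlt
    have hRge : (1 - M) / (-lam i) ≤ R := le_max_right _ _
    have hpos : 0 < -lam i := by linarith
    have : 1 - M ≤ R * (-lam i) := by
      rw [div_le_iff₀ hpos] at hRge
      linarith
    nlinarith
  have hlamI : ∀ i, ¬ A i → lam i = 0 := by
    intro i hAi
    have key : ∀ t : ℝ, 0 ≤ t * lam i := by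
      intro t
      have hmem : (t • fun j => if i = j then (1:ℝ) else 0) ∈ C := by
        refine ⟨0, fun j hAj => ?_⟩
        have hji : i ≠ j := fun h => hAi (h ▸ hAj)
        simp [hgdef, upperDiniM_zero, hji]
      have := hLC _ hmem
      rwa [map_smul, smul_eq_mul] at this
    have h1 := key 1
    have h2 := key (-1)
    simp at h1 h2
    linarith
  have hlam_nonneg : ∀ i, 0 ≤ lam i := by
    intro i
    by_cases hAi : A i
    · exact hlamA i hAi
    · rw [hlamI i hAi]
  have hlam_ne : lam ≠ 0 := by
    intro h
    have hmem : (fun _ : Fin (m + 1) => (-1:ℝ)) ∈ s := fun i _ => by norm_num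
    have hlt := hLs _ hmem
    rw [hLrepr] at hlt
    simp [h] at hlt
  have hcs : ∀ i : Fin (m + 1), i ≠ 0 → lam i * f i xh = 0 := by
    intro i hi
    by_cases hf : f i xh = 0
    · rw [hf, mul_zero]
    · rw [hlamI i (fun h => h.elim hi hf), zero_mul]
  have hsum : lam 0 * f 0 xh = ∑ i, lam i * f i xh := by
    exact (Finset.sum_eq_single 0 (fun i _ hi => hcs i hi)
      (fun h => absurd (Finset.mem_univ 0) h)).symm
  refine ⟨lam, hlam_nonneg, hlam_ne, hcs, hsum, fun x hxΩ => ?_⟩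
  obtain ⟨η, hη⟩ := hpc x hxΩ
  have hyC : (fun i => g i η) ∈ C := ⟨η, fun i _ => le_rfl⟩
  have h1 : 0 ≤ L (fun i => g i η) := hLC _ hyC
  rw [hLrepr] at h1
  have h1' : 0 ≤ ∑ i, lam i * upperDiniM (f i) xh η := by
    have : ∑ i, lam i * upperDiniM (f i) xh η = ∑ i, g i η * lam i :=
      Finset.sum_congr rfl fun i _ => mul_comm _ _
    rw [this]; exact h1
  have h2 := hη lam hlam_nonneg h1'
  have h3 : ∑ i, lam i * f i x - ∑ i, lam i * f i xh = ∑ i, lam i * (f i x - f i xh) := by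
    rw [← Finset.sum_sub_distrib]
    exact Finset.sum_congr rfl fun i _ => (mul_sub _ _ _).symm
  linarith
end
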